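/- Let e: [0,∞) → ℝ satisfy e(t) = e_hom(t) + ∫₀^t h(t-τ)(-e_f(τ)) dτ where |e_hom(t)| ≤ C₀ e^{-ρt} with C₀, ρ > 0, h is integrable with ∫₀^∞ |h| = ‖h‖₁ < ∞, and |e_f(τ)| ≤ e^{-ω_o τ}|e_f(0)| + L_f/ω_o for all τ ≥ 0 with ω_o > 0. Then limsup_{t→∞} |e(t)| ≤ ‖h‖₁ · L_f/ω_o. -/

import Mathlib

open MeasureTheory Topology

set_option maxHeartbeats 1000000

theorem stmt_11 (C0 ρ ωo L : ℝ) (hC0 : 0 < C0) (hρ : 0 < ρ) (hωo : 0 < ωo) (hL : 0 ≤ L)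
    (h ehom ef e : ℝ → ℝ)
    (hh : IntegrableOn h (Set.Ici 0))
    (hef : Measurable ef)
    (hhom : ∀ t, 0 ≤ t → |ehom t| ≤ C0 * Real.exp (-ρ * t))
    (hefb : ∀ τ, 0 ≤ τ → |ef τ| ≤ Real.exp (-ωo * τ) * |ef 0| + L / ωo)
    (hconv : ∀ t, 0 ≤ t → e t = ehom t - ∫ τ in (0:ℝ)..t, h (t - τ) * ef τ) :
    Filter.limsup (fun t => |e t|) Filter.atTop ≤ (∫ t in Set.Ici (0:ℝ), |h t|) * (L / ωo) := by
  set c := L / ωo with hc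
  set K := |ef 0| with hK
  set N := ∫ x in Set.Ioi (0:ℝ), |h x| with hN
  have hc0 : 0 ≤ c := div_nonneg hL hωo.le
  have hK0 : 0 ≤ K := abs_nonneg _
  have habsIoi : ∀ a : ℝ, 0 ≤ a → IntegrableOn (fun x => |h x|) (Set.Ioi a) :=
    fun a ha => MeasureTheory.IntegrableOn.mono_set hh.abs (fun x hx => le_trans ha (le_of_lt hx))
  have hN0 : 0 ≤ N := setIntegral_nonneg measurableSet_Ioi fun x _ => abs_nonneg _
  -- tail of the L¹ norm tends to zero
  have htail : Filter.Tendsto (fun a => ∫ x in Set.Ioi a, |h x|) Filter.atTop (𝓝 0) := by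
    have h1 : Filter.Tendsto (fun a : ℝ => ∫ x in (0:ℝ)..a, |h x|) Filter.atTop (𝓝 N) :=
      intervalIntegral_tendsto_integral_Ioi 0 (habsIoi 0 le_rfl) Filter.tendsto_id
    have h2 : Filter.Tendsto (fun a : ℝ => N - ∫ x in (0:ℝ)..a, |h x|) Filter.atTop
        (𝓝 (N - N)) := tendsto_const_nhds.sub h1
    rw [sub_self] at h2
    refine h2.congr' ?_
    filter_upwards [Filter.eventually_ge_atTop (0:ℝ)] with a ha
    have hu : Set.Ioc (0:ℝ) a ∪ Set.Ioi a = Set.Ioi 0 := Set.Ioc_union_Ioi_eq_Ioi ha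
    have hsum := MeasureTheory.setIntegral_union (f := fun x => |h x|) (μ := volume)
      (Set.Ioc_disjoint_Ioi le_rfl) measurableSet_Ioi
      ((habsIoi 0 le_rfl).mono_set Set.Ioc_subset_Ioi_self) (habsIoi a ha)
    rw [hu] at hsum
    rw [intervalIntegral.integral_of_le ha]
    rw [hN]
    linarith [hsum]
  -- main pointwise bound
  have key : ∀ t : ℝ, 0 ≤ t → |e t| ≤ C0 * Real.exp (-ρ * t)
      + (∫ x in Set.Ioi (t/2), |h x|) * (1 * K + c)
      + (Real.exp (-ωo * (t/2)) * K + c) * N := by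
    intro t ht
    have ht2 : (0:ℝ) ≤ t/2 := by linarith
    have ht2' : t/2 ≤ t := by linarith
    have hIoc : IntegrableOn h (Set.Ioc 0 t) := hh.mono_set (fun x hx => le_of_lt hx.1)
    have hI0 : IntervalIntegrable h volume 0 t :=
      (intervalIntegrable_iff_integrableOn_Ioc_of_le ht).mpr hIoc
    have hIs : IntervalIntegrable (fun τ => |h (t - τ)|) volume 0 t := by
      have h1 := (hI0.abs.comp_sub_left t)
      simp only [sub_zero, sub_self] at h1
      exact h1.symm
    set G : ℝ → ℝ := fun τ => |h (t - τ)| * (Real.exp (-ωo * τ) * K + c) with hG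
    have hGpos : ∀ τ, 0 ≤ G τ := fun τ => mul_nonneg (abs_nonneg _) (by positivity)
    have hGint : IntervalIntegrable G volume 0 t :=
      hIs.mul_continuousOn (Continuous.continuousOn (by continuity))
    have hA : |∫ τ in (0:ℝ)..t, h (t - τ) * ef τ| ≤ ∫ τ in (0:ℝ)..t, G τ := by
      have hbd : ∀ᵐ τ ∂(volume.restrict (Set.uIoc 0 t)), ‖h (t - τ) * ef τ‖ ≤ G τ := by
        rw [Set.uIoc_of_le ht]
        filter_upwards [ae_restrict_mem measurableSet_Ioc] with τ hτ
        rw [Real.norm_eq_abs, abs_mul]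
        exact mul_le_mul_of_nonneg_left (hefb τ hτ.1.le) (abs_nonneg _)
      have h2 := intervalIntegral.norm_integral_le_of_norm_le ht
        (by rw [Set.uIoc_of_le ht] at hbd; exact (ae_restrict_iff' measurableSet_Ioc).mp hbd) hGint
      rw [Real.norm_eq_abs] at h2
      exact h2
    have hsub1 : Set.uIcc (0:ℝ) (t/2) ⊆ Set.uIcc 0 t := by
      rw [Set.uIcc_of_le ht2, Set.uIcc_of_le ht]
      exact Set.Icc_subset_Icc le_rfl ht2'
    have hsub2 : Set.uIcc (t/2) t ⊆ Set.uIcc 0 t := by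
      rw [Set.uIcc_of_le ht2', Set.uIcc_of_le ht]
      exact Set.Icc_subset_Icc ht2 le_rfl
    have hG1 : IntervalIntegrable G volume 0 (t/2) := hGint.mono_set hsub1
    have hG2 : IntervalIntegrable G volume (t/2) t := hGint.mono_set hsub2
    have hIs1 : IntervalIntegrable (fun τ => |h (t - τ)|) volume 0 (t/2) := hIs.mono_set hsub1
    have hIs2 : IntervalIntegrable (fun τ => |h (t - τ)|) volume (t/2) t := hIs.mono_set hsub2
    have hsplit : ∫ τ in (0:ℝ)..t, G τ
        = (∫ τ in (0:ℝ)..(t/2), G τ) + ∫ τ in (t/2)..t, G τ :=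
      (intervalIntegral.integral_add_adjacent_intervals hG1 hG2).symm
    have hp1 : ∫ τ in (0:ℝ)..(t/2), G τ
        ≤ ∫ τ in (0:ℝ)..(t/2), |h (t - τ)| * (1 * K + c) := by
      refine intervalIntegral.integral_mono_on ht2 hG1 (hIs1.mul_const _) ?_
      intro τ hτ
      have he : Real.exp (-ωo * τ) ≤ 1 := Real.exp_le_one_iff.mpr (by nlinarith [hτ.1])
      exact mul_le_mul_of_nonneg_left (by nlinarith) (abs_nonneg _)
    have hp2 : ∫ τ in (t/2)..t, G τ
        ≤ ∫ τ in (t/2)..t, |h (t - τ)| * (Real.exp (-ωo * (t/2)) * K + c) := by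
      refine intervalIntegral.integral_mono_on ht2' hG2 (hIs2.mul_const _) ?_
      intro τ hτ
      have he : Real.exp (-ωo * τ) ≤ Real.exp (-ωo * (t/2)) :=
        Real.exp_le_exp.mpr (by nlinarith [hτ.1])
      exact mul_le_mul_of_nonneg_left (by nlinarith) (abs_nonneg _)
    have heq : t - t/2 = t/2 := by ring
    have hq1 : ∫ τ in (0:ℝ)..(t/2), |h (t - τ)| * (1 * K + c)
        = (∫ x in (t/2)..t, |h x|) * (1 * K + c) := by
      rw [intervalIntegral.integral_mul_const]
      congr 1
      rw [intervalIntegral.integral_comp_sub_left (fun x => |h x|) t, heq, sub_zero]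
    have hq2 : ∫ τ in (t/2)..t, |h (t - τ)| * (Real.exp (-ωo * (t/2)) * K + c)
        = (∫ x in (0:ℝ)..(t/2), |h x|) * (Real.exp (-ωo * (t/2)) * K + c) := by
      rw [intervalIntegral.integral_mul_const]
      congr 1
      rw [intervalIntegral.integral_comp_sub_left (fun x => |h x|) t, heq, sub_self]
    have hr1 : ∫ x in (t/2)..t, |h x| ≤ ∫ x in Set.Ioi (t/2), |h x| := by
      rw [intervalIntegral.integral_of_le ht2']
      exact setIntegral_mono_set (habsIoi _ ht2)
        (Filter.Eventually.of_forall fun x => abs_nonneg _)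
        (Set.Ioc_subset_Ioi_self.eventuallyLE)
    have hr2 : ∫ x in (0:ℝ)..(t/2), |h x| ≤ N := by
      rw [intervalIntegral.integral_of_le ht2, hN]
      exact setIntegral_mono_set (habsIoi 0 le_rfl)
        (Filter.Eventually.of_forall fun x => abs_nonneg _)
        (Set.Ioc_subset_Ioi_self.eventuallyLE)
    have hr1' : (∫ x in (t/2)..t, |h x|) * (1 * K + c)
        ≤ (∫ x in Set.Ioi (t/2), |h x|) * (1 * K + c) :=
      mul_le_mul_of_nonneg_right hr1 (by positivity)
    have hr2' : (∫ x in (0:ℝ)..(t/2), |h x|) * (Real.exp (-ωo * (t/2)) * K + c)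
        ≤ N * (Real.exp (-ωo * (t/2)) * K + c) :=
      mul_le_mul_of_nonneg_right hr2 (by positivity)
    rw [hconv t ht, sub_eq_add_neg]
    refine (abs_add_le _ _).trans ?_
    rw [abs_neg]
    have hhom' := hhom t ht
    linarith [hA, hsplit, hp1, hp2, hq1, hq2, hr1', hr2']
  -- the bounding function and its limit
  set b : ℝ → ℝ := fun t => C0 * Real.exp (-ρ * t)
      + (∫ x in Set.Ioi (t/2), |h x|) * (1 * K + c)
      + (Real.exp (-ωo * (t/2)) * K + c) * N with hb
  have hexp : ∀ r : ℝ, 0 < r →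
      Filter.Tendsto (fun t : ℝ => Real.exp (-r * t)) Filter.atTop (𝓝 0) := by
    intro r hr
    rw [Real.tendsto_exp_comp_nhds_zero]
    exact (Filter.tendsto_const_mul_atBot_of_neg (by linarith)).mpr Filter.tendsto_id
  have hhalf : Filter.Tendsto (fun t : ℝ => t / 2) Filter.atTop Filter.atTop :=
    Filter.Tendsto.atTop_div_const two_pos Filter.tendsto_id
  have e1 : Filter.Tendsto (fun t : ℝ => Real.exp (-ρ * t)) Filter.atTop (𝓝 0) := hexp ρ hρ
  have e2 : Filter.Tendsto (fun t : ℝ => Real.exp (-ωo * (t/2))) Filter.atTop (𝓝 0) :=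
    (hexp ωo hωo).comp hhalf
  have t1 : Filter.Tendsto (fun t : ℝ => ∫ x in Set.Ioi (t/2), |h x|) Filter.atTop (𝓝 0) :=
    htail.comp hhalf
  have hbt : Filter.Tendsto b Filter.atTop
      (𝓝 (C0 * 0 + 0 * (1 * K + c) + (0 * K + c) * N)) :=
    ((tendsto_const_nhds.mul e1).add (t1.mul tendsto_const_nhds)).add
      (((e2.mul tendsto_const_nhds).add tendsto_const_nhds).mul tendsto_const_nhds)
  have hbt' : Filter.Tendsto b Filter.atTop (𝓝 (N * c)) := by
    convert hbt using 2
    ring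
  have hfin : Filter.limsup (fun t => |e t|) Filter.atTop ≤ N * c := by
    have hev : (fun t => |e t|) ≤ᶠ[Filter.atTop] b := by
      filter_upwards [Filter.eventually_ge_atTop (0:ℝ)] with t ht
      exact key t ht
    have hcob : Filter.IsCoboundedUnder (· ≤ ·) Filter.atTop (fun t => |e t|) :=
      Filter.isCoboundedUnder_le_of_le Filter.atTop (x := 0) fun t => abs_nonneg _
    calc Filter.limsup (fun t => |e t|) Filter.atTop
        ≤ Filter.limsup b Filter.atTop :=
          Filter.limsup_le_limsup hev hcob hbt'.isBoundedUnder_le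
      _ = N * c := hbt'.limsup_eq
  rwa [MeasureTheory.integral_Ici_eq_integral_Ioi, ← hN]
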